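/- Let m ≥ 2 and consider ℂ[x₁,x₂] with the lexicographic monomial order with x₁ > x₂. The polynomials x₁^m + x₂^m, x₁x₂, and x₂^{m+1} form a Gröbner basis of the ideal they generate, and the monomials 1, x₁^i for 1 ≤ i ≤ m−1, and x₂^j for 1 ≤ j ≤ m form a ℂ-basis of the quotient ring ℂ[x₁,x₂]/(x₁^m + x₂^m, x₁x₂). -/

import Mathlib

open MvPolynomial

/-- The monomials `1, x₁^i (1 ≤ i ≤ m-1), x₂^j (1 ≤ j ≤ m)`, enumerated by `Fin (2m)`. -/
noncomputable def dihedralCoinvMonomial (m : ℕ) (t : Fin (2 * m)) :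
    MvPolynomial (Fin 2) ℂ :=
  if (t : ℕ) < m then X 0 ^ (t : ℕ) else X 1 ^ ((t : ℕ) - m + 1)

namespace DGB

open Finsupp

variable (m : ℕ)

noncomputable def I (m : ℕ) : Ideal (MvPolynomial (Fin 2) ℂ) :=
  Ideal.span {(X 0 ^ m + X 1 ^ m : MvPolynomial (Fin 2) ℂ), X 0 * X 1}

lemma XX_eq : (X 0 * X 1 : MvPolynomial (Fin 2) ℂ)
    = monomial (Finsupp.single 0 1 + Finsupp.single 1 1) 1 := by
  rw [← pow_one (X 0 : MvPolynomial (Fin 2) ℂ), ← pow_one (X 1 : MvPolynomial (Fin 2) ℂ),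
    X_pow_eq_monomial, X_pow_eq_monomial, monomial_mul, one_mul]

lemma coeff_eq (a b : MvPolynomial (Fin 2) ℂ) (d : Fin 2 →₀ ℕ) :
    coeff d (a * (X 0 ^ m + X 1 ^ m) + b * (X 0 * X 1)) =
      (if Finsupp.single 0 m ≤ d then coeff (d - Finsupp.single 0 m) a else 0)
    + (if Finsupp.single 1 m ≤ d then coeff (d - Finsupp.single 1 m) a else 0)
    + (if Finsupp.single 0 1 + Finsupp.single 1 1 ≤ d then
        coeff (d - (Finsupp.single 0 1 + Finsupp.single 1 1)) b else 0) := by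
  rw [mul_add, coeff_add, coeff_add, X_pow_eq_monomial, X_pow_eq_monomial, XX_eq,
    coeff_mul_monomial', coeff_mul_monomial', coeff_mul_monomial']
  simp only [mul_one]

lemma coeff_low (hm : 1 ≤ m) {f : MvPolynomial (Fin 2) ℂ} (hf : f ∈ I m)
    {d : Fin 2 →₀ ℕ} (h0 : d 0 < m) (h1 : d 1 < m) (h01 : d 0 = 0 ∨ d 1 = 0) :
    coeff d f = 0 := by
  obtain ⟨a, b, rfl⟩ := Ideal.mem_span_pair.1 hf
  rw [coeff_eq]
  rw [if_neg (by rw [Finsupp.single_le_iff]; omega),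
    if_neg (by rw [Finsupp.single_le_iff]; omega),
    if_neg (by
      rw [Finsupp.le_def]; push_neg
      rcases h01 with h | h
      · exact ⟨0, by simp [h]⟩
      · exact ⟨1, by simp [h, Finsupp.single_apply]⟩)]
  ring

lemma coeff_single1m (hm : 1 ≤ m) {f : MvPolynomial (Fin 2) ℂ} (hf : f ∈ I m) :
    coeff (Finsupp.single 1 m) f = coeff (Finsupp.single 0 m) f := by
  obtain ⟨a, b, rfl⟩ := Ideal.mem_span_pair.1 hf
  rw [coeff_eq, coeff_eq]
  rw [if_neg (by rw [Finsupp.single_le_iff]; simp [Finsupp.single_apply]; omega),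
    if_pos le_rfl,
    if_neg (by
      rw [Finsupp.le_def]; push_neg
      exact ⟨0, by simp [Finsupp.single_apply]⟩),
    if_pos le_rfl,
    if_neg (by rw [Finsupp.single_le_iff]; simp [Finsupp.single_apply]; omega),
    if_neg (by
      rw [Finsupp.le_def]; push_neg
      exact ⟨1, by simp [Finsupp.single_apply]⟩)]
  simp

/-- standard monomial set membership -/
def Std (m : ℕ) (d : Fin 2 →₀ ℕ) : Prop := (d 1 = 0 ∧ d 0 < m) ∨ (d 0 = 0 ∧ d 1 ≤ m)

lemma eq_zero_of_std (hm : 1 ≤ m) {f : MvPolynomial (Fin 2) ℂ} (hf : f ∈ I m)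
    (hs : ∀ d ∈ f.support, Std m d) : f = 0 := by
  ext d
  rw [coeff_zero]
  by_cases hd : d ∈ f.support
  · rcases hs d hd with ⟨h1, h0⟩ | ⟨h0, h1⟩
    · exact coeff_low m hm hf h0 (by omega) (Or.inr h1)
    · rcases Nat.lt_or_ge (d 1) m with h1' | h1'
      · exact coeff_low m hm hf (by omega) h1' (Or.inl h0)
      · have hdm : d 1 = m := le_antisymm h1 h1'
        have hd1 : d = Finsupp.single 1 m := by
          ext i; fin_cases i <;> simp [Finsupp.single_apply, h0, hdm]
        rw [hd1, coeff_single1m m hm hf]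
        rw [← MvPolynomial.notMem_support_iff]
        intro hmem
        rcases hs _ hmem with ⟨_, h⟩ | ⟨h, _⟩ <;> simp [Finsupp.single_apply] at h <;> omega
  · exact MvPolynomial.notMem_support_iff.1 hd


lemma X1_pow_mem (hm : 2 ≤ m) : (X 1 ^ (m + 1) : MvPolynomial (Fin 2) ℂ) ∈ I m := by
  rw [I, Ideal.mem_span_pair]
  refine ⟨X 1, -(X 0 ^ (m - 1)), ?_⟩
  have key : (X 0 : MvPolynomial (Fin 2) ℂ) ^ (m - 1) * X 0 = X 0 ^ m := by
    rw [← pow_succ, Nat.sub_add_cancel (by omega)]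
  linear_combination (-(X 1 : MvPolynomial (Fin 2) ℂ)) * key

lemma span_eq (hm : 2 ≤ m) :
    Ideal.span {(X 0 ^ m + X 1 ^ m : MvPolynomial (Fin 2) ℂ), X 0 * X 1, X 1 ^ (m + 1)}
      = I m := by
  apply le_antisymm
  · rw [Ideal.span_le]
    rintro x hx
    simp only [Set.mem_insert_iff, Set.mem_singleton_iff] at hx
    rcases hx with rfl | rfl | rfl
    · exact Ideal.subset_span (by simp)
    · exact Ideal.subset_span (by simp)
    · exact X1_pow_mem m hm
  · apply Ideal.span_mono
    intro x hx
    simp only [Set.mem_insert_iff, Set.mem_singleton_iff] at hx ⊢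
    tauto


lemma groebner (hm : 2 ≤ m) {f : MvPolynomial (Fin 2) ℂ} (hf : f ∈ I m) (hf0 : f ≠ 0) :
    ∃ s ∈ f.support, (∀ t ∈ f.support, toLex t ≤ toLex s) ∧
      (Finsupp.single (0 : Fin 2) m ≤ s ∨
        Finsupp.single (0 : Fin 2) 1 + Finsupp.single (1 : Fin 2) 1 ≤ s ∨
        Finsupp.single (1 : Fin 2) (m + 1) ≤ s) := by
  obtain ⟨s, hs, hmax⟩ := Finset.exists_max_image f.support (fun t => toLex t)
    (Finset.nonempty_iff_ne_empty.2 (fun h => hf0 (MvPolynomial.support_eq_empty.1 h)))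
  refine ⟨s, hs, hmax, ?_⟩
  by_contra h
  push_neg at h
  obtain ⟨h1, h2, h3⟩ := h
  rw [Finsupp.single_le_iff, not_le] at h1 h3
  have h2' : s 0 = 0 ∨ s 1 = 0 := by
    by_contra hc
    push_neg at hc
    refine h2 (Finsupp.le_def.2 fun i => ?_)
    fin_cases i <;> simp [Finsupp.single_apply] <;> omega
  have hcs : coeff s f ≠ 0 := MvPolynomial.mem_support_iff.1 hs
  rcases h2' with h0 | h0
  · -- s 0 = 0, s 1 ≤ m
    rcases Nat.lt_or_ge (s 1) m with hlt | hge
    · exact hcs (coeff_low m (by omega) hf (by omega) hlt (Or.inl h0))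
    · have hsm : s 1 = m := by omega
      have hseq : s = Finsupp.single 1 m := by
        ext i; fin_cases i <;> simp [Finsupp.single_apply, h0, hsm]
      have hnot : Finsupp.single (0 : Fin 2) m ∉ f.support := by
        intro hmem
        have := hmax _ hmem
        rw [hseq] at this
        have hlt : toLex (Finsupp.single (1 : Fin 2) m) < toLex (Finsupp.single (0 : Fin 2) m) := by
          rw [Finsupp.Lex.lt_iff]
          refine ⟨0, fun j hj => absurd hj (not_lt.2 (Fin.zero_le j)), ?_⟩
          simp [Finsupp.single_apply]; omega
        exact absurd this (not_le.2 hlt)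
      apply hcs
      rw [hseq, coeff_single1m m (by omega) hf]
      exact MvPolynomial.notMem_support_iff.1 hnot
  · -- s 1 = 0, s 0 < m
    exact hcs (coeff_low m (by omega) hf h1 (by omega) (Or.inr h0))


/-- the exponent of the t-th standard monomial -/
noncomputable def e (m : ℕ) (t : Fin (2 * m)) : Fin 2 →₀ ℕ :=
  if (t : ℕ) < m then Finsupp.single 0 (t : ℕ) else Finsupp.single 1 ((t : ℕ) - m + 1)

lemma dcm_eq (t : Fin (2 * m)) :
    dihedralCoinvMonomial m t = monomial (e m t) 1 := by
  rw [dihedralCoinvMonomial, e]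
  split_ifs <;> rw [X_pow_eq_monomial]

lemma e_inj : Function.Injective (e m) := by
  intro t u h
  rw [e, e] at h
  have ht2 := t.2
  have hu2 := u.2
  split_ifs at h with h1 h2 h2
  · exact Fin.ext (Finsupp.single_injective 0 h)
  · have := DFunLike.congr_fun h (1 : Fin 2)
    simp [Finsupp.single_apply] at this
  · have := DFunLike.congr_fun h (1 : Fin 2)
    simp [Finsupp.single_apply] at this
  · have := Finsupp.single_injective 1 h
    exact Fin.ext (by omega)

lemma e_std (t : Fin (2 * m)) : Std m (e m t) := by
  have ht2 := t.2
  rw [e, Std]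
  split_ifs with h1
  · exact Or.inl ⟨by simp [Finsupp.single_apply], by simpa using h1⟩
  · refine Or.inr ⟨by simp [Finsupp.single_apply], by simp [Finsupp.single_apply]; omega⟩

lemma lin_indep (hm : 2 ≤ m) :
    LinearIndependent ℂ (fun t : Fin (2 * m) =>
      Ideal.Quotient.mk (I m) (dihedralCoinvMonomial m t)) := by
  rw [Fintype.linearIndependent_iff]
  intro g hg t0
  set F : MvPolynomial (Fin 2) ℂ := ∑ t : Fin (2 * m), g t • dihedralCoinvMonomial m t with hF
  have hFmem : F ∈ I m := by
    rw [← Ideal.Quotient.eq_zero_iff_mem, ← Ideal.Quotient.mkₐ_eq_mk ℂ, hF, map_sum]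
    simp only [map_smul, Ideal.Quotient.mkₐ_eq_mk]
    exact hg
  have hcoeff : ∀ d, coeff d F = ∑ t : Fin (2 * m), if e m t = d then g t else 0 := by
    intro d
    rw [hF, MvPolynomial.coeff_sum]
    apply Finset.sum_congr rfl
    intro t _
    rw [dcm_eq, MvPolynomial.coeff_smul, coeff_monomial]
    split_ifs <;> simp
  have hFstd : ∀ d ∈ F.support, Std m d := by
    intro d hd
    have hne := MvPolynomial.mem_support_iff.1 hd
    rw [hcoeff] at hne
    by_contra hstd
    apply hne
    apply Finset.sum_eq_zero
    intro t _
    rw [if_neg]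
    intro het
    exact hstd (het ▸ e_std m t)
  have hF0 : F = 0 := eq_zero_of_std m (by omega) hFmem hFstd
  have : coeff (e m t0) F = g t0 := by
    rw [hcoeff]
    rw [Finset.sum_eq_single t0]
    · rw [if_pos rfl]
    · intro t _ hne
      rw [if_neg (fun het => hne (e_inj m het))]
    · intro habs; exact absurd (Finset.mem_univ t0) habs
  rw [hF0, coeff_zero] at this
  exact this.symm


lemma XX_mem : (X 0 * X 1 : MvPolynomial (Fin 2) ℂ) ∈ I m :=
  Ideal.subset_span (by simp)

lemma mono_mem (d : Fin 2 →₀ ℕ) (h0 : 1 ≤ d 0) (h1 : 1 ≤ d 1) :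
    (monomial d 1 : MvPolynomial (Fin 2) ℂ) ∈ I m := by
  have hle : Finsupp.single (0 : Fin 2) 1 + Finsupp.single (1 : Fin 2) 1 ≤ d := by
    rw [Finsupp.le_def]
    intro i
    fin_cases i <;> simp [Finsupp.single_apply] <;> omega
  have : (monomial d 1 : MvPolynomial (Fin 2) ℂ)
      = monomial (d - (Finsupp.single 0 1 + Finsupp.single 1 1)) 1 * (X 0 * X 1) := by
    rw [← pow_one (X 0 : MvPolynomial (Fin 2) ℂ), ← pow_one (X 1 : MvPolynomial (Fin 2) ℂ),
      X_pow_eq_monomial, X_pow_eq_monomial, monomial_mul, monomial_mul, one_mul, one_mul,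
      tsub_add_cancel_of_le hle]
  rw [this]
  exact Ideal.mul_mem_left _ _ (XX_mem m)

lemma span_top (hm : 2 ≤ m) :
    Submodule.span ℂ (Set.range (fun t : Fin (2 * m) =>
      Ideal.Quotient.mk (I m) (dihedralCoinvMonomial m t))) = ⊤ := by
  set N := Submodule.span ℂ (Set.range (fun t : Fin (2 * m) =>
      Ideal.Quotient.mk (I m) (dihedralCoinvMonomial m t))) with hN
  have hstd : ∀ t : Fin (2 * m), Ideal.Quotient.mk (I m) (dihedralCoinvMonomial m t) ∈ N :=
    fun t => Submodule.subset_span ⟨t, rfl⟩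
  have key : ∀ d : Fin 2 →₀ ℕ, Ideal.Quotient.mk (I m) (monomial d 1) ∈ N := by
    intro d
    by_cases hd1 : d 1 = 0
    · -- powers of X 0
      obtain ⟨k, hk⟩ : ∃ k, d = Finsupp.single 0 k :=
        ⟨d 0, by ext i; fin_cases i <;> simp [Finsupp.single_apply, hd1]⟩
      subst hk
      by_cases hd0 : k < m
      · have : dihedralCoinvMonomial m ⟨k, by omega⟩
            = (monomial (Finsupp.single 0 k) 1 : MvPolynomial (Fin 2) ℂ) := by
          rw [dihedralCoinvMonomial, if_pos (by simpa using hd0)]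
          exact X_pow_eq_monomial
        rw [← this]
        exact hstd _
      · push_neg at hd0
        have heq : (monomial (Finsupp.single 0 k) 1 : MvPolynomial (Fin 2) ℂ)
            = X 0 ^ (k - m) * (X 0 ^ m + X 1 ^ m) - X 0 ^ (k - m) * X 1 ^ m := by
          rw [← X_pow_eq_monomial, mul_add, ← pow_add, Nat.sub_add_cancel hd0]
          ring
        have hmem : (X 0 ^ (k - m) * (X 0 ^ m + X 1 ^ m) : MvPolynomial (Fin 2) ℂ) ∈ I m :=
          Ideal.mul_mem_left _ _ (Ideal.subset_span (by simp))
        rw [heq, map_sub, Ideal.Quotient.eq_zero_iff_mem.2 hmem, zero_sub]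
        apply Submodule.neg_mem
        rcases Nat.lt_or_ge m k with hlt | hge
        · have : (X 0 ^ (k - m) * X 1 ^ m : MvPolynomial (Fin 2) ℂ) ∈ I m := by
            rw [X_pow_eq_monomial, X_pow_eq_monomial, monomial_mul, one_mul]
            apply mono_mem
            · simp [Finsupp.single_apply]; omega
            · simp [Finsupp.single_apply]; omega
          rw [Ideal.Quotient.eq_zero_iff_mem.2 this]
          exact Submodule.zero_mem N
        · have hd0m : k = m := by omega
          rw [hd0m, Nat.sub_self, pow_zero, one_mul]
          have : dihedralCoinvMonomial m ⟨2 * m - 1, by omega⟩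
              = (X 1 ^ m : MvPolynomial (Fin 2) ℂ) := by
            rw [dihedralCoinvMonomial, if_neg (by simp; omega)]
            congr 1
            simp
            omega
          rw [← this]
          exact hstd _
    · by_cases hd0 : d 0 = 0
      · -- powers of X 1, exponent ≥ 1
        obtain ⟨k, hk1, hk⟩ : ∃ k, 1 ≤ k ∧ d = Finsupp.single 1 k :=
          ⟨d 1, by omega, by ext i; fin_cases i <;> simp [Finsupp.single_apply, hd0]⟩
        subst hk
        by_cases hdm : k ≤ m
        · have : dihedralCoinvMonomial m ⟨m + k - 1, by omega⟩
              = (monomial (Finsupp.single 1 k) 1 : MvPolynomial (Fin 2) ℂ) := by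
            rw [dihedralCoinvMonomial, if_neg (by simp; omega), ← X_pow_eq_monomial]
            congr 1
            simp
            omega
          rw [← this]
          exact hstd _
        · push_neg at hdm
          have hmem : (monomial (Finsupp.single 1 k) 1 : MvPolynomial (Fin 2) ℂ) ∈ I m := by
            rw [← X_pow_eq_monomial, show k = (k - (m + 1)) + (m + 1) by omega, pow_add]
            exact Ideal.mul_mem_left _ _ (X1_pow_mem m hm)
          rw [Ideal.Quotient.eq_zero_iff_mem.2 hmem]
          exact Submodule.zero_mem N
      · rw [Ideal.Quotient.eq_zero_iff_mem.2 (mono_mem m d (by omega) (by omega))]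
        exact Submodule.zero_mem N
  rw [eq_top_iff]
  rintro x -
  obtain ⟨f, rfl⟩ := Ideal.Quotient.mk_surjective x
  rw [f.as_sum, map_sum]
  apply Submodule.sum_mem
  intro d hd
  have : (monomial d (coeff d f) : MvPolynomial (Fin 2) ℂ) = coeff d f • monomial d 1 := by
    rw [MvPolynomial.smul_monomial, smul_eq_mul, mul_one]
  rw [this, ← Ideal.Quotient.mkₐ_eq_mk ℂ, map_smul]
  exact Submodule.smul_mem N _ (by rw [Ideal.Quotient.mkₐ_eq_mk]; exact key d)

end DGB

/-- For `m ≥ 2` and the lexicographic monomial order on `ℂ[x₁,x₂]` with `x₁ > x₂`: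
the polynomials `x₁^m + x₂^m`, `x₁x₂` and `x₂^{m+1}` form a Gröbner basis of the ideal they
generate (i.e. that ideal equals `(x₁^m + x₂^m, x₁x₂)`, and the lex-leading monomial of any
nonzero member of the ideal is divisible by one of `x₁^m`, `x₁x₂`, `x₂^{m+1}`), and the
monomials `1`, `x₁^i (1 ≤ i ≤ m-1)`, `x₂^j (1 ≤ j ≤ m)` form a `ℂ`-basis of the quotient
`ℂ[x₁,x₂]/(x₁^m + x₂^m, x₁x₂)`. -/
theorem dihedral_coinvariant_groebner_basis (m : ℕ) (hm : 2 ≤ m) :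
    Ideal.span {(X 0 ^ m + X 1 ^ m : MvPolynomial (Fin 2) ℂ), X 0 * X 1, X 1 ^ (m + 1)}
      = Ideal.span {(X 0 ^ m + X 1 ^ m : MvPolynomial (Fin 2) ℂ), X 0 * X 1} ∧
    (∀ f ∈ Ideal.span {(X 0 ^ m + X 1 ^ m : MvPolynomial (Fin 2) ℂ), X 0 * X 1}, f ≠ 0 →
      ∃ s ∈ f.support, (∀ t ∈ f.support, toLex t ≤ toLex s) ∧
        (Finsupp.single (0 : Fin 2) m ≤ s ∨
          Finsupp.single (0 : Fin 2) 1 + Finsupp.single (1 : Fin 2) 1 ≤ s ∨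
          Finsupp.single (1 : Fin 2) (m + 1) ≤ s)) ∧
    LinearIndependent ℂ (fun t : Fin (2 * m) =>
      Ideal.Quotient.mk (Ideal.span {(X 0 ^ m + X 1 ^ m : MvPolynomial (Fin 2) ℂ), X 0 * X 1})
        (dihedralCoinvMonomial m t)) ∧
    Submodule.span ℂ (Set.range (fun t : Fin (2 * m) =>
      Ideal.Quotient.mk (Ideal.span {(X 0 ^ m + X 1 ^ m : MvPolynomial (Fin 2) ℂ), X 0 * X 1})
        (dihedralCoinvMonomial m t))) = ⊤ := by
  exact ⟨DGB.span_eq m hm, fun f hf hf0 => DGB.groebner m hm hf hf0,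
    DGB.lin_indep m hm, DGB.span_top m hm⟩
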